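/- Let k be a field, G a group with identity e, H a Hopf algebra over k, and ℬ : G → Submodule k H a Hopf G-algebra structure on H. Then every primitive element of H is concentrated in degree e: if x ∈ H satisfies Δ(x) = 1 ⊗ x + x ⊗ 1, then x ∈ ℬ e. -/

import Mathlib

open scoped TensorProduct

/-- A Hopf `G`-algebra structure on a Hopf algebra `H` over `k`: an internal grading
`ℬ : G → Submodule k H` making `H` a `G`-graded algebra, such that each homogeneous part
is a subcoalgebra and the antipode maps the degree `g` part into the degree `g⁻¹` part. -/
structure HopfGAlgebraStruct (k : Type*) [Field k] (G : Type*) [Group G] [DecidableEq G]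
    (H : Type*) [Ring H] [HopfAlgebra k H] (ℬ : G → Submodule k H) : Prop where
  internal : DirectSum.IsInternal ℬ
  one_mem : (1 : H) ∈ ℬ (1 : G)
  mul_mem : ∀ {g h : G} {x y : H}, x ∈ ℬ g → y ∈ ℬ h → x * y ∈ ℬ (g * h)
  comul_mem : ∀ (g : G), ∀ x ∈ ℬ g,
    (Coalgebra.comul (R := k) (A := H)) x ∈
      LinearMap.range (TensorProduct.map (ℬ g).subtype (ℬ g).subtype)
  antipode_mem : ∀ (g : G), ∀ x ∈ ℬ g, HopfAlgebra.antipode (R := k) x ∈ ℬ g⁻¹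

/-- every primitive element of a Hopf `G`-algebra is concentrated in
degree `e` (the identity of the group `G`). -/
theorem primitive_mem_identity_component
    (k : Type*) [Field k] (G : Type*) [Group G] [DecidableEq G]
    (H : Type*) [Ring H] [HopfAlgebra k H] (ℬ : G → Submodule k H)
    (hH : HopfGAlgebraStruct k G H ℬ) (x : H)
    (hx : Coalgebra.comul (R := k) x = 1 ⊗ₜ[k] x + x ⊗ₜ[k] 1) :
    x ∈ ℬ (1 : G) := by
  classical
  -- decomposition of `H` as a direct sum
  set eqv := LinearEquiv.ofBijective (DirectSum.coeLinearMap ℬ) hH.internal with heqv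
  -- projection onto the degree `g` component, as a map `H →ₗ[k] H`
  set p : G → H →ₗ[k] H := fun g =>
    (ℬ g).subtype ∘ₗ (DirectSum.component k G _ g) ∘ₗ eqv.symm.toLinearMap with hp
  have hp_apply : ∀ (g : G) (y : H), p g y = (eqv.symm y g : H) := fun _ _ => rfl
  have hp_mem : ∀ (g : G) (y : H), p g y ∈ ℬ g := fun g y => (eqv.symm y g).2
  have hp_of_mem_same : ∀ (g : G) (y : H), y ∈ ℬ g → p g y = y := by
    intro g y hy
    rw [hp_apply, hH.internal.ofBijective_coeLinearMap_of_mem hy]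
  have hp_of_mem_ne : ∀ (g h : G), g ≠ h → ∀ (y : H), y ∈ ℬ g → p h y = 0 := by
    intro g h hgh y hy
    rw [hp_apply, hH.internal.ofBijective_coeLinearMap_of_mem_ne hgh hy]
    rfl
  -- x is the sum of its components
  have hsum : (Finset.sum (eqv.symm x).support fun g => p g x) = x := by
    have : x = DirectSum.coeLinearMap ℬ (eqv.symm x) := (eqv.apply_symm_apply x).symm
    conv_rhs => rw [this]
    rw [DirectSum.coeLinearMap_eq_dfinsuppSum, DFinsupp.sum]
    rfl
  -- counit-based retraction killing the second factor
  set f : H ⊗[k] H →ₗ[k] H :=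
    (TensorProduct.rid k H).toLinearMap ∘ₗ
      TensorProduct.map LinearMap.id (Coalgebra.counit (R := k) (A := H)) with hf
  have hf_tmul : ∀ (a b : H), f (a ⊗ₜ[k] b) = Coalgebra.counit (R := k) b • a := by
    intro a b; simp [hf]
  -- main claim: every component of degree `g ≠ 1` vanishes
  have hzero : ∀ g : G, g ≠ 1 → p g x = 0 := by
    intro g hg
    -- apply `f ∘ (p g ⊗ p 1)` to `hx`
    have key := congrArg (f ∘ₗ TensorProduct.map (p g) (p 1)) hx
    -- LHS is zero: comul of each component lands in `ℬ h ⊗ ℬ h`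
    have hL : (f ∘ₗ TensorProduct.map (p g) (p 1)) (Coalgebra.comul (R := k) x) = 0 := by
      have hx_sum : Coalgebra.comul (R := k) x =
          Finset.sum (eqv.symm x).support fun h =>
            Coalgebra.comul (R := k) (p h x) := by
        rw [← map_sum, hsum]
      rw [hx_sum, map_sum]
      refine Finset.sum_eq_zero fun h _ => ?_
      obtain ⟨t, ht⟩ := hH.comul_mem h (p h x) (hp_mem h x)
      rw [← ht, ← LinearMap.comp_apply, LinearMap.comp_assoc,
        ← TensorProduct.map_comp]
      have : (p g ∘ₗ (ℬ h).subtype) = 0 ∨ (p 1 ∘ₗ (ℬ h).subtype) = 0 := by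
        by_cases hhg : h = g
        · right
          ext y
          exact hp_of_mem_ne h 1 (hhg ▸ hg) y y.2
        · left
          ext y
          exact hp_of_mem_ne h g (Ne.symm fun e => hhg e.symm) y y.2
      rcases this with h0 | h0 <;>
        simp [h0, TensorProduct.map_zero_left, TensorProduct.map_zero_right]
    -- RHS is `p g x`
    have hR : (f ∘ₗ TensorProduct.map (p g) (p 1)) (1 ⊗ₜ[k] x + x ⊗ₜ[k] 1) = p g x := by
      have h1 : p g (1 : H) = 0 := hp_of_mem_ne 1 g (Ne.symm hg) 1 hH.one_mem
      have h2 : p 1 (1 : H) = 1 := hp_of_mem_same 1 1 hH.one_mem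
      rw [map_add]
      simp only [LinearMap.comp_apply, TensorProduct.map_tmul, h1, h2,
        TensorProduct.zero_tmul, map_zero, hf_tmul]
      simp [Bialgebra.counit_one]
    rw [hL, hR] at key
    exact key.symm
  -- conclude
  rw [← hsum]
  refine Submodule.sum_mem _ fun g _ => ?_
  by_cases hg : g = 1
  · subst hg; exact hp_mem 1 x
  · rw [hzero g hg]; exact (ℬ 1).zero_mem
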